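/- Let k ≥ 1, let −d ≤ d_1* < … < d_{k+1}* ≤ d with minimal gap d_min*, and let a_1*, …, a_{k+1}* be real numbers with |a_j*| ≥ m for all j, where m > 0. Let A* be the (2k+1)×(k+1) matrix with entries (d_j*)^(i−1), i = 1,…,2k+1, and for q ≤ k let A(q) be the (2k+1)×q matrix with entries d_j^(i−1) for real nodes d_1, …, d_q in [−d, d]. Then the infimum over all choices of q ≤ k nodes d_p ∈ [−d,d] and coefficients a_p ∈ ℝ of ‖A(q)·a − A*·a*‖₂ is at least ζ(k+1)·ξ(k)·m·(d_min*)^(2k) / (1+d)^(2k), where ζ(k+1) = ((k+1)/2)!·((k−1)/2)! for odd k and ((k/2)!)² for even k, and ξ as defined: ξ(1)=1/2, ξ(k)=((k−1)/2)!·((k−3)/2)!/4 for odd k ≥ 3, ξ(k)=(((k−2)/2)!)²/4 for even k. -/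

import Mathlib

open Matrix

/-- ζ(n) = (n/2)!·((n-2)/2)! for even n and (((n-1)/2)!)² for odd n;
in particular ζ(k+1) = ((k+1)/2)!·((k-1)/2)! for odd k and ((k/2)!)² for even k. -/
noncomputable def paperZeta (n : ℕ) : ℝ :=
  if Even n then (Nat.factorial (n / 2) : ℝ) * (Nat.factorial ((n - 2) / 2) : ℝ)
  else ((Nat.factorial ((n - 1) / 2) : ℝ)) ^ 2

/-- The factor ξ from the paper. -/
noncomputable def paperXi (k : ℕ) : ℝ :=
  if k = 1 then 1 / 2
  else if Odd k then (Nat.factorial ((k - 1) / 2) : ℝ) * (Nat.factorial ((k - 3) / 2) : ℝ) / 4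
  else ((Nat.factorial ((k - 2) / 2) : ℝ)) ^ 2 / 4

open Polynomial Finset

lemma two_pow_le_succ_mul_central (n : ℕ) : 2 ^ n ≤ (n+1) * Nat.choose n (n / 2) := by
  calc 2^n = ∑ i ∈ Finset.range (n+1), Nat.choose n i := (Nat.sum_range_choose n).symm
  _ ≤ ∑ _i ∈ Finset.range (n+1), Nat.choose n (n/2) :=
      Finset.sum_le_sum fun i _ => Nat.choose_le_middle i n
  _ = (n+1) * Nat.choose n (n/2) := by rw [Finset.sum_const, Finset.card_range, smul_eq_mul]

lemma fact_le_fact_mul_pow : ∀ (r q k : ℕ), q + r = k →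
    Nat.factorial k ≤ Nat.factorial q * k ^ r := by
  intro r
  induction r with
  | zero =>
    intro q k h
    obtain rfl : q = k := by omega
    simp
  | succ r ih =>
    intro q k h
    have h1 := ih (q+1) k (by omega)
    have hqk : q + 1 ≤ k := by omega
    calc Nat.factorial k ≤ Nat.factorial (q+1) * k^r := h1
    _ = Nat.factorial q * ((q+1) * k^r) := by rw [Nat.factorial_succ]; ring
    _ ≤ Nat.factorial q * (k * k^r) :=
        Nat.mul_le_mul_left _ (Nat.mul_le_mul_right _ hqk)
    _ = Nat.factorial q * k^(r+1) := by rw [pow_succ]; ring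

lemma zeta_eq (k : ℕ) :
    paperZeta (k+1) = ((Nat.factorial (k/2) * Nat.factorial (k - k/2) : ℕ) : ℝ) := by
  rcases Nat.even_or_odd k with hk | hk
  · obtain ⟨m, rfl⟩ := hk
    have h1 : ¬ Even (m + m + 1) := by simp [Nat.even_iff]; omega
    rw [paperZeta, if_neg h1]
    have e1 : (m + m + 1 - 1)/2 = m := by omega
    have e2 : (m + m)/2 = m := by omega
    have e3 : m + m - m = m := by omega
    rw [e1, e2, e3]
    push_cast
    ring
  · obtain ⟨m, rfl⟩ := hk
    have h1 : Even (2*m + 1 + 1) := ⟨m+1, by omega⟩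
    rw [paperZeta, if_pos h1]
    have e1 : (2*m + 1 + 1)/2 = m + 1 := by omega
    have e2 : (2*m + 1 + 1 - 2)/2 = m := by omega
    have e3 : (2*m + 1)/2 = m := by omega
    have e4 : 2*m + 1 - m = m + 1 := by omega
    rw [e1, e2, e3, e4]
    push_cast
    ring

lemma middle_le {k t : ℕ} (h : t ≤ k) :
    Nat.factorial (k/2) * Nat.factorial (k - k/2) ≤ Nat.factorial t * Nat.factorial (k - t) := by
  have h1 := Nat.choose_mul_factorial_mul_factorial h
  have h2 := Nat.choose_mul_factorial_mul_factorial (Nat.div_le_self k 2)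
  have h3 : Nat.choose k t ≤ Nat.choose k (k/2) := Nat.choose_le_middle t k
  have hpos : 0 < Nat.choose k (k/2) := Nat.choose_pos (Nat.div_le_self k 2)
  have key : Nat.choose k (k/2) * (Nat.factorial (k/2) * Nat.factorial (k - k/2))
      = Nat.choose k t * (Nat.factorial t * Nat.factorial (k - t)) := by
    rw [← mul_assoc, h2, ← mul_assoc, h1]
  refine Nat.le_of_mul_le_mul_left ?_ hpos
  calc Nat.choose k (k/2) * (Nat.factorial (k/2) * Nat.factorial (k - k/2))
      = Nat.choose k t * (Nat.factorial t * Nat.factorial (k - t)) := key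
  _ ≤ Nat.choose k (k/2) * (Nat.factorial t * Nat.factorial (k - t)) :=
      Nat.mul_le_mul_right _ h3

lemma xi_le_fact (k : ℕ) (hk : 1 ≤ k) : 2^k * paperXi k ≤ (Nat.factorial k : ℝ) := by
  rcases eq_or_lt_of_le hk with h1 | h2
  · rw [← h1, paperXi, if_pos rfl]
    norm_num [Nat.factorial]
  · have hk2 : 2 ≤ k := h2
    set n := k - 2 with hn
    have hkn : k = n + 2 := by omega
    have hNat : 2^k * (Nat.factorial (n/2) * Nat.factorial (n - n/2)) ≤ 4 * Nat.factorial k := by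
      have key := two_pow_le_succ_mul_central n
      have hfacts := Nat.choose_mul_factorial_mul_factorial (Nat.div_le_self n 2)
      calc 2^k * (Nat.factorial (n/2) * Nat.factorial (n - n/2))
          = 4 * (2^n * (Nat.factorial (n/2) * Nat.factorial (n - n/2))) := by
            rw [hkn]; ring
      _ ≤ 4 * (((n+1) * Nat.choose n (n/2)) * (Nat.factorial (n/2) * Nat.factorial (n - n/2))) := by
            have := Nat.mul_le_mul_right (Nat.factorial (n/2) * Nat.factorial (n - n/2)) key
            exact Nat.mul_le_mul_left 4 this
      _ = 4 * ((n+1) * (Nat.choose n (n/2) * Nat.factorial (n/2) * Nat.factorial (n - n/2))) := by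
            ring
      _ = 4 * ((n+1) * Nat.factorial n) := by rw [hfacts]
      _ = 4 * Nat.factorial (n+1) := by rw [Nat.factorial_succ]
      _ ≤ 4 * Nat.factorial k := by
            exact Nat.mul_le_mul_left 4 (Nat.factorial_le (by omega))
    have hxi : paperXi k = ((Nat.factorial (n/2) * Nat.factorial (n - n/2) : ℕ) : ℝ) / 4 := by
      rcases Nat.even_or_odd k with he | ho
      · obtain ⟨m, hm⟩ := he
        have hm1 : 1 ≤ m := by omega
        rw [paperXi, if_neg (by omega), if_neg (by simp [Nat.odd_iff]; omega)]
        have e1 : (k - 2)/2 = m - 1 := by omega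
        rw [e1]
        have e3 : n - (m - 1) = m - 1 := by omega
        rw [e3]
        push_cast
        ring
      · obtain ⟨m, hm⟩ := ho
        have hm1 : 1 ≤ m := by omega
        rw [paperXi, if_neg (by omega), if_pos (by simp [Nat.odd_iff]; omega)]
        have e1 : (k - 1)/2 = m := by omega
        have e2 : (k - 3)/2 = m - 1 := by omega
        have e3 : n/2 = m - 1 := by omega
        rw [e1, e2, e3]
        have e4 : n - (m - 1) = m := by omega
        rw [e4]
        push_cast
        ring
    rw [hxi]
    have hcast : ((2:ℝ)^k * (Nat.factorial (n/2) * Nat.factorial (n - n/2) : ℕ))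
        ≤ 4 * (Nat.factorial k : ℝ) := by
      exact_mod_cast hNat
    linarith

lemma prodNatDist {n : ℕ} (t : Fin (n+1)) :
    ∏ j ∈ Finset.univ.erase t, Nat.dist j.val t.val
      = Nat.factorial t.val * Nat.factorial (n - t.val) := by
  classical
  set T := t.val with hT
  have h1 : ∀ j ∈ Finset.univ.erase t, Nat.dist j.val T
      = (fun i : ℕ => if i = T then 1 else Nat.dist i T) j.val := by
    intro j hj
    have hne : j ≠ t := (Finset.mem_erase.mp hj).1
    have : j.val ≠ T := fun h => hne (Fin.ext h)
    simp [this]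
  rw [Finset.prod_congr rfl h1]
  have h2 : ∏ j ∈ Finset.univ.erase t, (fun i : ℕ => if i = T then 1 else Nat.dist i T) j.val
      = ∏ j : Fin (n+1), (fun i : ℕ => if i = T then 1 else Nat.dist i T) j.val := by
    rw [← Finset.mul_prod_erase Finset.univ _ (Finset.mem_univ t)]
    simp
    intro h; exact absurd hT.symm h
  rw [h2, Fin.prod_univ_eq_prod_range (fun i => if i = T then 1 else Nat.dist i T) (n+1)]
  have hTn : T + 1 ≤ n + 1 := Nat.succ_le_succ (Nat.lt_succ_iff.mp t.isLt)
  rw [Finset.range_eq_Ico, ← Finset.prod_Ico_consecutive _ (Nat.zero_le (T+1)) hTn]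
  have e1 : ∏ i ∈ Finset.Ico 0 (T+1), (if i = T then 1 else Nat.dist i T) = Nat.factorial T := by
    rw [← Finset.range_eq_Ico, Finset.prod_range_succ, if_pos rfl, mul_one]
    have : ∀ i ∈ Finset.range T, (if i = T then 1 else Nat.dist i T) = T - i := by
      intro i hi
      have hi' := Finset.mem_range.mp hi
      rw [if_neg (by omega), Nat.dist_eq_sub_of_le hi'.le]
    rw [Finset.prod_congr rfl this]
    have h3 := Finset.prod_range_reflect (fun j => j + 1) T
    have h4 : ∀ i ∈ Finset.range T, T - 1 - i + 1 = T - i := by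
      intro i hi; have := Finset.mem_range.mp hi; omega
    rw [← Finset.prod_congr rfl h4, h3, Finset.prod_range_add_one_eq_factorial]
  have e2 : ∏ i ∈ Finset.Ico (T+1) (n+1), (if i = T then 1 else Nat.dist i T)
      = Nat.factorial (n - T) := by
    rw [Finset.prod_Ico_eq_prod_range]
    have : ∀ i ∈ Finset.range (n + 1 - (T+1)), (if T + 1 + i = T then 1 else Nat.dist (T+1+i) T) = i + 1 := by
      intro i hi
      rw [if_neg (by omega), Nat.dist_eq_sub_of_le_right (by omega)]
      omega
    rw [Finset.prod_congr rfl this, Finset.prod_range_add_one_eq_factorial]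
    congr 1
    omega
  rw [e1, e2]

lemma prod_abs_sub_ge {n : ℕ} {x : Fin (n+1) → ℝ} {δ : ℝ} (hδ : 0 ≤ δ)
    (hsep : ∀ i j : Fin (n+1), (Nat.dist i.val j.val : ℝ) * δ ≤ |x i - x j|)
    (t : Fin (n+1)) :
    ((Nat.factorial t.val * Nat.factorial (n - t.val) : ℕ) : ℝ) * δ ^ n ≤
      ∏ j ∈ Finset.univ.erase t, |x t - x j| := by
  have h2 : ∏ j ∈ Finset.univ.erase t, ((Nat.dist t.val j.val : ℝ) * δ)
      ≤ ∏ j ∈ Finset.univ.erase t, |x t - x j| :=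
    Finset.prod_le_prod (fun j _ => mul_nonneg (Nat.cast_nonneg _) hδ) (fun j _ => hsep t j)
  refine le_trans (le_of_eq ?_) h2
  rw [Finset.prod_mul_distrib, Finset.prod_const]
  have hcard : (Finset.univ.erase t).card = n := by
    rw [Finset.card_erase_of_mem (Finset.mem_univ t), Finset.card_univ, Fintype.card_fin]; omega
  rw [hcard]
  congr 1
  rw [← Nat.cast_prod]
  congr 1
  rw [← prodNatDist t]
  exact Finset.prod_congr rfl fun j _ => by rw [Nat.dist_comm]

lemma prod_map_nonneg (M : Multiset ℝ) (f : ℝ → ℝ) (h : ∀ r, 0 ≤ f r) :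
    0 ≤ (M.map f).prod := by
  induction M using Multiset.induction_on with
  | empty => simp
  | cons r M ih => simp only [Multiset.map_cons, Multiset.prod_cons]; exact mul_nonneg (h r) ih

lemma prod_map_le (M : Multiset ℝ) (f : ℝ → ℝ) (c : ℝ) (h0 : ∀ r, 0 ≤ f r)
    (h1 : ∀ r ∈ M, f r ≤ c) : (M.map f).prod ≤ c ^ Multiset.card M := by
  induction M using Multiset.induction_on with
  | empty => simp
  | cons r M ih =>
    simp only [Multiset.map_cons, Multiset.prod_cons, Multiset.card_cons, pow_succ]
    rw [mul_comm (c ^ Multiset.card M) c]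
    exact mul_le_mul (h1 r (Multiset.mem_cons_self r M))
      (ih fun s hs => h1 s (Multiset.mem_cons_of_mem hs))
      (prod_map_nonneg M f h0) ((h0 r).trans (h1 r (Multiset.mem_cons_self r M)))

lemma multiset_coeff_L1 (M : Multiset ℝ) :
    ∑ i ∈ Finset.range (Multiset.card M + 1), |((M.map fun r => X - C r).prod).coeff i| ≤
      (M.map fun r => 1 + |r|).prod := by
  induction M using Multiset.induction_on with
  | empty => simp
  | cons r M ih =>
    simp only [Multiset.map_cons, Multiset.prod_cons, Multiset.card_cons]
    set P := (M.map fun r => X - C r).prod with hP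
    have hdegP : P.natDegree ≤ Multiset.card M := by
      refine le_trans (Polynomial.natDegree_multiset_prod_le _) (le_of_eq ?_)
      rw [Multiset.map_map]
      have : (M.map (Polynomial.natDegree ∘ fun r : ℝ => X - C r)) =
          M.map (fun _ : ℝ => 1) := Multiset.map_congr rfl fun s _ => by
        simp [Polynomial.natDegree_X_sub_C]
      rw [this, Multiset.map_const', Multiset.sum_replicate, smul_eq_mul, mul_one]
    have habs : ∀ a b : ℝ, |a - b| ≤ |a| + |b| := fun a b => by
      rw [sub_eq_add_neg]; exact (abs_add_le _ _).trans (by rw [abs_neg])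
    calc ∑ i ∈ Finset.range (Multiset.card M + 1 + 1), |((X - C r) * P).coeff i|
        ≤ ∑ i ∈ Finset.range (Multiset.card M + 1 + 1),
            (|(X * P).coeff i| + |r| * |P.coeff i|) := by
          refine Finset.sum_le_sum fun i _ => ?_
          have : ((X - C r) * P).coeff i = (X * P).coeff i - r * P.coeff i := by
            rw [sub_mul, Polynomial.coeff_sub, Polynomial.coeff_C_mul]
          rw [this]
          exact (habs _ _).trans (by rw [abs_mul])
      _ = (∑ i ∈ Finset.range (Multiset.card M + 1 + 1), |(X * P).coeff i|)
            + |r| * ∑ i ∈ Finset.range (Multiset.card M + 1 + 1), |P.coeff i| := by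
          rw [Finset.sum_add_distrib, Finset.mul_sum]
      _ = (∑ i ∈ Finset.range (Multiset.card M + 1), |P.coeff i|)
            + |r| * ∑ i ∈ Finset.range (Multiset.card M + 1), |P.coeff i| := by
          congr 1
          · rw [Finset.sum_range_succ']
            simp [Polynomial.coeff_X_mul, Polynomial.mul_coeff_zero]
          · congr 1
            rw [Finset.sum_range_succ]
            have hz : P.coeff (Multiset.card M + 1) = 0 :=
              Polynomial.coeff_eq_zero_of_natDegree_lt (by omega)
            simp [hz]
      _ = (1 + |r|) * ∑ i ∈ Finset.range (Multiset.card M + 1), |P.coeff i| := by ring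
      _ ≤ (1 + |r|) * (M.map fun r => 1 + |r|).prod :=
          mul_le_mul_of_nonneg_left ih (by positivity)
lemma exists_good_node {N : ℕ} (z : Fin (N+1) → ℝ) (hz : Function.Injective z) {δ : ℝ}
    (hδ : 0 < δ)
    (hsep : ∀ i j : Fin (N+1), (Nat.dist i.val j.val : ℝ) * δ ≤ |z i - z j|)
    (y : Fin N → ℝ) :
    ∃ t : Fin (N+1), (Nat.factorial N : ℝ) * (δ / 2) ^ N ≤ ∏ p, |z t - y p| := by
  classical
  by_contra hcon
  push_neg at hcon
  set W : ℝ[X] := ∏ p : Fin N, (X - C (y p)) with hW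
  have hmon : W.Monic := monic_prod_of_monic _ _ fun p _ => monic_X_sub_C _
  have hdeg : W.natDegree = N := by
    rw [hW, Polynomial.natDegree_prod_of_monic _ _ fun p _ => monic_X_sub_C _]
    simp [Polynomial.natDegree_X_sub_C]
  have hinj : Set.InjOn z (Finset.univ : Finset (Fin (N+1))) := fun a _ b _ h => hz h
  have hdlt : W.degree < ((Finset.univ : Finset (Fin (N+1))).card : ℕ) := by
    rw [Finset.card_univ, Fintype.card_fin]
    refine lt_of_le_of_lt Polynomial.degree_le_natDegree ?_
    rw [hdeg]
    exact_mod_cast Nat.lt_succ_self N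
  have key := Lagrange.eq_interpolate hinj hdlt
  have hco : (1:ℝ) = ∑ i : Fin (N+1),
      W.eval (z i) * (∏ j ∈ Finset.univ.erase i, (z i - z j))⁻¹ := by
    have h1 : W.coeff N = 1 := by
      have := hmon.coeff_natDegree
      rwa [hdeg] at this
    conv_lhs => rw [← h1, key]
    rw [Lagrange.interpolate_apply, Polynomial.finset_sum_coeff]
    refine Finset.sum_congr rfl fun i _ => ?_
    rw [Polynomial.coeff_C_mul]
    congr 1
    rw [Lagrange.basis]
    have hbd : ∀ j ∈ Finset.univ.erase i, Lagrange.basisDivisor (z i) (z j)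
        = C ((z i - z j)⁻¹) * (X - C (z j)) := fun j _ => rfl
    rw [Finset.prod_congr rfl hbd, Finset.prod_mul_distrib, ← map_prod]
    rw [Polynomial.coeff_C_mul]
    have hmon2 : (∏ j ∈ Finset.univ.erase i, (X - C (z j))).Monic :=
      monic_prod_of_monic _ _ fun j _ => monic_X_sub_C _
    have hdeg2 : (∏ j ∈ Finset.univ.erase i, (X - C (z j))).natDegree = N := by
      rw [Polynomial.natDegree_prod_of_monic _ _ fun j _ => monic_X_sub_C _]
      simp only [Polynomial.natDegree_X_sub_C]
      rw [Finset.sum_const, Finset.card_erase_of_mem (Finset.mem_univ i),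
        Finset.card_univ, Fintype.card_fin, smul_eq_mul, mul_one]
      omega
    have hc1 : (∏ j ∈ Finset.univ.erase i, (X - C (z j))).coeff N = 1 := by
      have := hmon2.coeff_natDegree
      rwa [hdeg2] at this
    rw [hc1, mul_one, Finset.prod_inv_distrib]
  have hwpos : ∀ i : Fin (N+1), (0:ℝ) < ∏ j ∈ Finset.univ.erase i, |z i - z j| := by
    intro i
    refine Finset.prod_pos fun j hj => ?_
    have hne : z i ≠ z j := fun h => (Finset.mem_erase.mp hj).1 ((hz h).symm)
    exact abs_pos.mpr (sub_ne_zero_of_ne hne)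
  have hEt : ∀ i : Fin (N+1), |W.eval (z i)| < (Nat.factorial N : ℝ) * (δ/2)^N := by
    intro i
    have he : W.eval (z i) = ∏ p, (z i - y p) := by
      rw [hW, Polynomial.eval_prod]; simp
    rw [he, Finset.abs_prod]
    exact hcon i
  have step1 : (1:ℝ) ≤ ∑ i : Fin (N+1),
      |W.eval (z i)| * (∏ j ∈ Finset.univ.erase i, |z i - z j|)⁻¹ := by
    calc (1:ℝ) = |∑ i : Fin (N+1), W.eval (z i) * (∏ j ∈ Finset.univ.erase i, (z i - z j))⁻¹| := by
          rw [← hco]; simp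
    _ ≤ ∑ i : Fin (N+1), |W.eval (z i) * (∏ j ∈ Finset.univ.erase i, (z i - z j))⁻¹| :=
          Finset.abs_sum_le_sum_abs _ _
    _ = ∑ i : Fin (N+1), |W.eval (z i)| * (∏ j ∈ Finset.univ.erase i, |z i - z j|)⁻¹ := by
          refine Finset.sum_congr rfl fun i _ => ?_
          rw [abs_mul, abs_inv, Finset.abs_prod]
  have step2 : ∑ i : Fin (N+1), |W.eval (z i)| * (∏ j ∈ Finset.univ.erase i, |z i - z j|)⁻¹
      < ∑ i : Fin (N+1), ((Nat.factorial N : ℝ) * (δ/2)^N) *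
          (∏ j ∈ Finset.univ.erase i, |z i - z j|)⁻¹ := by
    refine Finset.sum_lt_sum_of_nonempty Finset.univ_nonempty fun i _ => ?_
    exact mul_lt_mul_of_pos_right (hEt i) (inv_pos.mpr (hwpos i))
  have step3 : ∑ i : Fin (N+1), ((Nat.factorial N : ℝ) * (δ/2)^N) *
          (∏ j ∈ Finset.univ.erase i, |z i - z j|)⁻¹
      ≤ ∑ i : Fin (N+1), ((Nat.factorial N : ℝ) * (δ/2)^N) *
          (((Nat.factorial i.val * Nat.factorial (N - i.val) : ℕ) : ℝ) * δ ^ N)⁻¹ := by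
    refine Finset.sum_le_sum fun i _ => ?_
    refine mul_le_mul_of_nonneg_left ?_ (by positivity)
    have hb := prod_abs_sub_ge hδ.le hsep i
    have hpos : (0:ℝ) < ((Nat.factorial i.val * Nat.factorial (N - i.val) : ℕ) : ℝ) * δ ^ N := by
      have : 0 < Nat.factorial i.val * Nat.factorial (N - i.val) :=
        Nat.mul_pos (Nat.factorial_pos _) (Nat.factorial_pos _)
      positivity
    exact inv_anti₀ hpos hb
  have step4 : ∑ i : Fin (N+1), ((Nat.factorial N : ℝ) * (δ/2)^N) *
          (((Nat.factorial i.val * Nat.factorial (N - i.val) : ℕ) : ℝ) * δ ^ N)⁻¹ = 1 := by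
    have hterm : ∀ i : Fin (N+1), ((Nat.factorial N : ℝ) * (δ/2)^N) *
          (((Nat.factorial i.val * Nat.factorial (N - i.val) : ℕ) : ℝ) * δ ^ N)⁻¹
        = (Nat.choose N i.val : ℝ) * (1/2)^N := by
      intro i
      have hle : i.val ≤ N := Nat.lt_succ_iff.mp i.isLt
      have hch := Nat.choose_mul_factorial_mul_factorial hle
      have hcast : (Nat.factorial N : ℝ)
          = (Nat.choose N i.val : ℝ) * ((Nat.factorial i.val : ℝ) * (Nat.factorial (N - i.val) : ℝ)) := by
        rw [← hch]; push_cast; ring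
      have hf1 : (Nat.factorial i.val : ℝ) ≠ 0 := by positivity
      have hf2 : (Nat.factorial (N - i.val) : ℝ) ≠ 0 := by positivity
      have hδne : δ ≠ 0 := ne_of_gt hδ
      rw [hcast]
      push_cast
      field_simp
      ring
    rw [Finset.sum_congr rfl fun i _ => hterm i, ← Finset.sum_mul]
    have hsum : ∑ i : Fin (N+1), (Nat.choose N i.val : ℝ) = (2:ℝ)^N := by
      rw [Fin.sum_univ_eq_sum_range (fun i => (Nat.choose N i : ℝ)) (N+1)]
      rw [← Nat.cast_sum, Nat.sum_range_choose]
      push_cast; ring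
    rw [hsum, one_div, inv_pow, mul_inv_cancel₀ (by positivity)]
  linarith
/-- Lower bound for nonlinear approximation in Vandermonde space: a combination of `k+1`
separated Vandermonde vectors of length `2k+1` with coefficients of modulus at least `m`
cannot be approximated by any combination of at most `k` Vandermonde vectors with nodes in
`[-d, d]` better than `ζ(k+1)·ξ(k)·m·(d*_min)^(2k)/(1+d)^(2k)` in the Euclidean norm. -/
theorem stmt_16 (k : ℕ) (hk : 1 ≤ k) (d : ℝ) (dstar : Fin (k + 1) → ℝ)
    (hmono : StrictMono dstar) (hin : ∀ j, -d ≤ dstar j ∧ dstar j ≤ d) (dmin : ℝ)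
    (hdmin : IsLeast {x : ℝ | ∃ i j : Fin (k + 1), i ≠ j ∧ x = |dstar i - dstar j|} dmin)
    (m : ℝ) (hm : 0 < m) (astar : Fin (k + 1) → ℝ) (ha : ∀ j, m ≤ |astar j|)
    (q : ℕ) (hq : q ≤ k) (dd : Fin q → ℝ) (hdd : ∀ p, |dd p| ≤ d) (a : Fin q → ℝ) :
    Real.sqrt (∑ i : Fin (2 * k + 1),
        (((Matrix.of fun (i : Fin (2 * k + 1)) (p : Fin q) => dd p ^ (i : ℕ)).mulVec a -
          (Matrix.of fun (i : Fin (2 * k + 1)) (j : Fin (k + 1)) =>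
            dstar j ^ (i : ℕ)).mulVec astar) i) ^ 2) ≥
      paperZeta (k + 1) * paperXi k * m * dmin ^ (2 * k) / (1 + d) ^ (2 * k) := by
  classical
  obtain ⟨hmem, hlb⟩ := hdmin
  have hδpos : 0 < dmin := by
    obtain ⟨i0, j0, hij0, hdeq⟩ := hmem
    rw [hdeq]
    exact abs_pos.mpr (sub_ne_zero_of_ne (hmono.injective.ne hij0))
  have hstep : ∀ (n : ℕ) (i j : Fin (k+1)), (j:ℕ) = (i:ℕ) + n →
      (n : ℝ) * dmin ≤ dstar j - dstar i := by
    intro n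
    induction n with
    | zero =>
      intro i j h
      have : j = i := Fin.ext (by omega)
      subst this
      simp
    | succ n ih =>
      intro i j h
      have hlt : (i:ℕ) + n < k + 1 := by have := j.isLt; omega
      set j' : Fin (k+1) := ⟨(i:ℕ) + n, hlt⟩ with hj'
      have h1 := ih i j' rfl
      have h2 : dmin ≤ dstar j - dstar j' := by
        have hne : j' ≠ j := by
          intro hh
          have hvv : (j':ℕ) = (j:ℕ) := by rw [hh]
          simp [hj'] at hvv
          omega
        have hle : dmin ≤ |dstar j' - dstar j| := hlb ⟨j', j, hne, rfl⟩
        have hmlt : dstar j' < dstar j := hmono (by rw [Fin.lt_def]; simp [hj']; omega)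
        rwa [abs_sub_comm, abs_of_pos (sub_pos.mpr hmlt)] at hle
      push_cast
      linarith
  have hsepAbs : ∀ i j : Fin (k+1), (Nat.dist i.val j.val : ℝ) * dmin ≤ |dstar i - dstar j| := by
    intro i j
    rcases le_total (i:ℕ) (j:ℕ) with h | h
    · have h1 := hstep ((j:ℕ) - (i:ℕ)) i j (by omega)
      have h2 : dstar i ≤ dstar j := hmono.monotone (by rwa [Fin.le_def])
      have habs : |dstar i - dstar j| = dstar j - dstar i := by
        rw [abs_sub_comm]
        exact abs_of_nonneg (by linarith)
      rw [habs, Nat.dist_eq_sub_of_le h]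
      exact h1
    · have h1 := hstep ((i:ℕ) - (j:ℕ)) j i (by omega)
      have h2 : dstar j ≤ dstar i := hmono.monotone (by rwa [Fin.le_def])
      have habs : |dstar i - dstar j| = dstar i - dstar j := abs_of_nonneg (by linarith)
      rw [habs, Nat.dist_eq_sub_of_le_right h]
      exact h1
  have hd1 : ∀ j, |dstar j| ≤ d := fun j => abs_le.mpr (hin j)
  have hdpos : 0 < d := by
    have h01 : dstar ⟨0, by omega⟩ < dstar ⟨1, by omega⟩ := hmono (by rw [Fin.lt_def]; simp)
    have ha0 := (hin ⟨0, by omega⟩).1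
    have ha1 := (hin ⟨1, by omega⟩).2
    linarith
  have hkd : (k:ℝ) * dmin ≤ 2 * d := by
    have h1 := hstep k ⟨0, by omega⟩ ⟨k, by omega⟩ (by simp)
    have h0 := (hin ⟨0, by omega⟩).1
    have h2 := (hin ⟨k, by omega⟩).2
    linarith
  have hqk1 : q + 1 ≤ k + 1 := by omega
  obtain ⟨t0, ht0⟩ := exists_good_node (fun i : Fin (q+1) => dstar (Fin.castLE hqk1 i))
      (fun a b hab => Fin.castLE_injective hqk1 (hmono.injective hab))
      hδpos
      (fun i j => by
        have := hsepAbs (Fin.castLE hqk1 i) (Fin.castLE hqk1 j)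
        simpa using this)
      dd
  set jstar : Fin (k+1) := Fin.castLE hqk1 t0 with hjstar
  set ee : ℝ := if 0 ≤ dstar jstar then -d else d with hee
  have heabs : |ee| ≤ d := by
    rw [hee]
    split_ifs
    · rw [abs_neg, abs_of_pos hdpos]
    · rw [abs_of_pos hdpos]
  have hefar : (k:ℝ) * dmin / 2 ≤ |dstar jstar - ee| := by
    have hkd2 : (k:ℝ) * dmin / 2 ≤ d := by linarith
    rw [hee]
    split_ifs with h
    · rw [sub_neg_eq_add]
      refine hkd2.trans (le_trans ?_ (le_abs_self _))
      linarith
    · push_neg at h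
      rw [abs_sub_comm]
      refine hkd2.trans (le_trans ?_ (le_abs_self _))
      linarith
  set W : Polynomial ℝ := (∏ p : Fin q, (X - C (dd p))) *
      (∏ j ∈ Finset.univ.erase jstar, (X - C (dstar j))) * (X - C ee)^(k - q) with hWdef
  have hW1m : (∏ p : Fin q, (X - C (dd p))).Monic :=
    monic_prod_of_monic _ _ fun _ _ => monic_X_sub_C _
  have hW2m : (∏ j ∈ Finset.univ.erase jstar, (X - C (dstar j))).Monic :=
    monic_prod_of_monic _ _ fun _ _ => monic_X_sub_C _
  have hW3m : ((X - C ee)^(k-q)).Monic := (monic_X_sub_C ee).pow _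
  have hdeg1 : (∏ p : Fin q, (X - C (dd p))).natDegree = q := by
    rw [Polynomial.natDegree_prod_of_monic _ _ fun _ _ => monic_X_sub_C _]
    simp [Polynomial.natDegree_X_sub_C]
  have hdeg2 : (∏ j ∈ Finset.univ.erase jstar, (X - C (dstar j))).natDegree = k := by
    rw [Polynomial.natDegree_prod_of_monic _ _ fun _ _ => monic_X_sub_C _]
    simp only [Polynomial.natDegree_X_sub_C]
    rw [Finset.sum_const, Finset.card_erase_of_mem (Finset.mem_univ jstar),
      Finset.card_univ, Fintype.card_fin, smul_eq_mul, mul_one]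
    omega
  have hdeg3 : ((X - C ee)^(k-q)).natDegree = k - q := by
    rw [Polynomial.natDegree_pow, Polynomial.natDegree_X_sub_C, mul_one]
  have hWdeg : W.natDegree = 2*k := by
    rw [hWdef, Polynomial.Monic.natDegree_mul (hW1m.mul hW2m) hW3m,
      Polynomial.Monic.natDegree_mul hW1m hW2m, hdeg1, hdeg2, hdeg3]
    omega
  have hevalW : ∀ x : ℝ, W.eval x = (∏ p : Fin q, (x - dd p)) *
      (∏ j ∈ Finset.univ.erase jstar, (x - dstar j)) * (x - ee)^(k-q) := by
    intro x
    rw [hWdef]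
    simp [Polynomial.eval_prod]
  have hWdd : ∀ p0 : Fin q, W.eval (dd p0) = 0 := by
    intro p0
    rw [hevalW]
    have hz : ∏ p : Fin q, (dd p0 - dd p) = 0 :=
      Finset.prod_eq_zero (Finset.mem_univ p0) (sub_self _)
    rw [hz, zero_mul, zero_mul]
  have hWstar : ∀ j : Fin (k+1), j ≠ jstar → W.eval (dstar j) = 0 := by
    intro j hj
    rw [hevalW]
    have hz : ∏ jj ∈ Finset.univ.erase jstar, (dstar j - dstar jj) = 0 :=
      Finset.prod_eq_zero (Finset.mem_erase.mpr ⟨hj, Finset.mem_univ _⟩) (sub_self _)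
    rw [hz, mul_zero, zero_mul]
  set F : Fin (2*k+1) → ℝ :=
      (Matrix.of fun (i : Fin (2 * k + 1)) (p : Fin q) => dd p ^ (i : ℕ)).mulVec a -
        (Matrix.of fun (i : Fin (2 * k + 1)) (j : Fin (k + 1)) =>
          dstar j ^ (i : ℕ)).mulVec astar with hF
  have hEi : ∀ i : Fin (2*k+1), F i = (∑ p : Fin q, dd p ^ (i:ℕ) * a p)
      - (∑ j : Fin (k+1), dstar j ^ (i:ℕ) * astar j) := by
    intro i
    rw [hF]
    simp [Matrix.mulVec, dotProduct]
  have hpowsum : ∀ x : ℝ, ∑ i : Fin (2*k+1), W.coeff (i:ℕ) * x^(i:ℕ) = W.eval x := by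
    intro x
    rw [Fin.sum_univ_eq_sum_range (fun i => W.coeff i * x ^ i) (2*k+1)]
    exact (Polynomial.eval_eq_sum_range' (by rw [hWdeg]; omega) x).symm
  have hS : ∑ i : Fin (2*k+1), W.coeff (i:ℕ) * F i
      = -(astar jstar * W.eval (dstar jstar)) := by
    have part1 : ∑ i : Fin (2*k+1), W.coeff (i:ℕ) * ∑ p : Fin q, dd p ^ (i:ℕ) * a p
        = ∑ p : Fin q, W.eval (dd p) * a p := by
      calc ∑ i : Fin (2*k+1), W.coeff (i:ℕ) * ∑ p : Fin q, dd p ^ (i:ℕ) * a p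
          = ∑ i : Fin (2*k+1), ∑ p : Fin q, (W.coeff (i:ℕ) * dd p ^ (i:ℕ)) * a p := by
            refine Finset.sum_congr rfl fun i _ => ?_
            rw [Finset.mul_sum]
            exact Finset.sum_congr rfl fun p _ => by ring
        _ = ∑ p : Fin q, ∑ i : Fin (2*k+1), (W.coeff (i:ℕ) * dd p ^ (i:ℕ)) * a p :=
            Finset.sum_comm
        _ = ∑ p : Fin q, W.eval (dd p) * a p := by
            refine Finset.sum_congr rfl fun p _ => ?_
            rw [← Finset.sum_mul, hpowsum (dd p)]
    have part2 : ∑ i : Fin (2*k+1), W.coeff (i:ℕ) * ∑ j : Fin (k+1), dstar j ^ (i:ℕ) * astar j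
        = ∑ j : Fin (k+1), W.eval (dstar j) * astar j := by
      calc ∑ i : Fin (2*k+1), W.coeff (i:ℕ) * ∑ j : Fin (k+1), dstar j ^ (i:ℕ) * astar j
          = ∑ i : Fin (2*k+1), ∑ j : Fin (k+1), (W.coeff (i:ℕ) * dstar j ^ (i:ℕ)) * astar j := by
            refine Finset.sum_congr rfl fun i _ => ?_
            rw [Finset.mul_sum]
            exact Finset.sum_congr rfl fun j _ => by ring
        _ = ∑ j : Fin (k+1), ∑ i : Fin (2*k+1), (W.coeff (i:ℕ) * dstar j ^ (i:ℕ)) * astar j :=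
            Finset.sum_comm
        _ = ∑ j : Fin (k+1), W.eval (dstar j) * astar j := by
            refine Finset.sum_congr rfl fun j _ => ?_
            rw [← Finset.sum_mul, hpowsum (dstar j)]
    calc ∑ i : Fin (2*k+1), W.coeff (i:ℕ) * F i
        = (∑ i : Fin (2*k+1), W.coeff (i:ℕ) * ∑ p : Fin q, dd p ^ (i:ℕ) * a p)
          - (∑ i : Fin (2*k+1), W.coeff (i:ℕ) * ∑ j : Fin (k+1), dstar j ^ (i:ℕ) * astar j) := by
          rw [← Finset.sum_sub_distrib]
          refine Finset.sum_congr rfl fun i _ => ?_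
          rw [hEi i, mul_sub]
      _ = (∑ p : Fin q, W.eval (dd p) * a p) - (∑ j : Fin (k+1), W.eval (dstar j) * astar j) := by
          rw [part1, part2]
      _ = -(astar jstar * W.eval (dstar jstar)) := by
          have hz1 : ∑ p : Fin q, W.eval (dd p) * a p = 0 := by
            refine Finset.sum_eq_zero fun p _ => ?_
            rw [hWdd p, zero_mul]
          have hz2 : ∑ j : Fin (k+1), W.eval (dstar j) * astar j
              = W.eval (dstar jstar) * astar jstar := by
            refine Finset.sum_eq_single jstar (fun j _ hj => ?_) (fun h => absurd (Finset.mem_univ _) h)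
            rw [hWstar j hj, zero_mul]
          rw [hz1, hz2]
          ring
  -- lower bounds for the evaluation
  have hP1 : (Nat.factorial q : ℝ) * (dmin/2)^q ≤ ∏ p, |dstar jstar - dd p| := ht0
  have hjk : jstar.val ≤ k := Nat.lt_succ_iff.mp jstar.isLt
  have hP2 : ((Nat.factorial (k/2) * Nat.factorial (k - k/2) : ℕ) : ℝ) * dmin^k
      ≤ ∏ j ∈ Finset.univ.erase jstar, |dstar jstar - dstar j| := by
    refine le_trans ?_ (prod_abs_sub_ge hδpos.le hsepAbs jstar)
    have hmid : ((Nat.factorial (k/2) * Nat.factorial (k - k/2) : ℕ) : ℝ)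
        ≤ ((Nat.factorial jstar.val * Nat.factorial (k - jstar.val) : ℕ) : ℝ) := by
      exact_mod_cast middle_le hjk
    exact mul_le_mul_of_nonneg_right hmid (by positivity)
  have hP3 : ((k:ℝ) * dmin/2)^(k-q) ≤ |dstar jstar - ee|^(k-q) :=
    pow_le_pow_left₀ (by positivity) hefar _
  have habs_eval : |W.eval (dstar jstar)| = (∏ p, |dstar jstar - dd p|) *
      (∏ j ∈ Finset.univ.erase jstar, |dstar jstar - dstar j|) * |dstar jstar - ee|^(k-q) := by
    rw [hevalW, abs_mul, abs_mul, abs_pow, Finset.abs_prod, Finset.abs_prod]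
  have hlow : ((Nat.factorial q : ℝ) * (dmin/2)^q) *
      (((Nat.factorial (k/2) * Nat.factorial (k - k/2) : ℕ) : ℝ) * dmin^k) *
      (((k:ℝ)*dmin/2)^(k-q)) ≤ |W.eval (dstar jstar)| := by
    rw [habs_eval]
    have hnn1 : (0:ℝ) ≤ (Nat.factorial q : ℝ) * (dmin/2)^q := by positivity
    have hnn2 : (0:ℝ) ≤ ((Nat.factorial (k/2) * Nat.factorial (k - k/2) : ℕ) : ℝ) * dmin^k := by
      positivity
    have hnn3 : (0:ℝ) ≤ ∏ p, |dstar jstar - dd p| :=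
      Finset.prod_nonneg fun p _ => abs_nonneg _
    have hnn4 : (0:ℝ) ≤ ∏ j ∈ Finset.univ.erase jstar, |dstar jstar - dstar j| :=
      Finset.prod_nonneg fun j _ => abs_nonneg _
    refine mul_le_mul (mul_le_mul hP1 hP2 hnn2 hnn3) hP3 (by positivity) ?_
    exact mul_nonneg hnn3 hnn4
  have hSabs : m * (((Nat.factorial q : ℝ) * (dmin/2)^q) *
      (((Nat.factorial (k/2) * Nat.factorial (k - k/2) : ℕ) : ℝ) * dmin^k) *
      (((k:ℝ)*dmin/2)^(k-q))) ≤ |∑ i : Fin (2*k+1), W.coeff (i:ℕ) * F i| := by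
    rw [hS, abs_neg, abs_mul]
    refine mul_le_mul (ha jstar) hlow ?_ (abs_nonneg _)
    positivity
  -- Cauchy-Schwarz
  set Sc : ℝ := ∑ i : Fin (2*k+1), |W.coeff (i:ℕ)| with hSc
  have hScnn : 0 ≤ Sc := Finset.sum_nonneg fun i _ => abs_nonneg _
  have hCS : |∑ i : Fin (2*k+1), W.coeff (i:ℕ) * F i|
      ≤ Sc * Real.sqrt (∑ i : Fin (2*k+1), F i ^ 2) := by
    have h1 := Finset.sum_mul_sq_le_sq_mul_sq Finset.univ
      (fun i : Fin (2*k+1) => W.coeff (i:ℕ)) F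
    have h2 : ∑ i : Fin (2*k+1), (W.coeff (i:ℕ))^2 ≤ Sc^2 := by
      have h3 := Finset.sum_sq_le_sq_sum_of_nonneg
        (f := fun i : Fin (2*k+1) => |W.coeff (i:ℕ)|) (s := Finset.univ)
        (fun i _ => abs_nonneg _)
      simpa [sq_abs] using h3
    have hF2 : (0:ℝ) ≤ ∑ i : Fin (2*k+1), F i^2 := Finset.sum_nonneg fun i _ => sq_nonneg _
    have h4 : (∑ i : Fin (2*k+1), W.coeff (i:ℕ) * F i)^2 ≤ Sc^2 * ∑ i : Fin (2*k+1), F i^2 :=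
      le_trans h1 (mul_le_mul_of_nonneg_right h2 hF2)
    calc |∑ i : Fin (2*k+1), W.coeff (i:ℕ) * F i|
        = Real.sqrt ((∑ i : Fin (2*k+1), W.coeff (i:ℕ) * F i)^2) := (Real.sqrt_sq_eq_abs _).symm
      _ ≤ Real.sqrt (Sc^2 * ∑ i : Fin (2*k+1), F i^2) := Real.sqrt_le_sqrt h4
      _ = Sc * Real.sqrt (∑ i : Fin (2*k+1), F i^2) := by
          rw [Real.sqrt_mul (sq_nonneg _), Real.sqrt_sq hScnn]
  -- L1 bound on coefficients
  set M : Multiset ℝ := Multiset.map dd Finset.univ.val +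
      Multiset.map dstar (Finset.univ.erase jstar).val + Multiset.replicate (k-q) ee with hM
  have hcard : Multiset.card M = 2*k := by
    rw [hM]
    simp only [Multiset.card_add, Multiset.card_map, Multiset.card_replicate]
    have c1 : Multiset.card (Finset.univ : Finset (Fin q)).val = q := by
      rw [← Finset.card_def, Finset.card_univ, Fintype.card_fin]
    have c2 : Multiset.card (Finset.univ.erase jstar).val = k := by
      rw [← Finset.card_def, Finset.card_erase_of_mem (Finset.mem_univ jstar),
        Finset.card_univ, Fintype.card_fin]
      omega
    rw [c1, c2]
    omega
  have hWM : W = (M.map fun r => X - C r).prod := by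
    rw [hM, hWdef]
    rw [Finset.prod_eq_multiset_prod, Finset.prod_eq_multiset_prod]
    simp only [Multiset.map_add, Multiset.prod_add, Multiset.map_map, Multiset.map_replicate,
      Multiset.prod_replicate, Function.comp]
  have hScle : Sc ≤ (1+d)^(2*k) := by
    have hL1 := multiset_coeff_L1 M
    rw [← hWM, hcard] at hL1
    have hsum_eq : Sc = ∑ i ∈ Finset.range (2*k+1), |W.coeff i| :=
      Fin.sum_univ_eq_sum_range (fun i => |W.coeff i|) (2*k+1)
    have hprodle : (M.map fun r => 1 + |r|).prod ≤ (1+d)^(2*k) := by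
      have hstep2 := prod_map_le M (fun r => 1 + |r|) (1+d) (fun r => by positivity)
        (fun r hr => by
          have habs : |r| ≤ d := by
            rw [hM] at hr
            rcases Multiset.mem_add.mp hr with h | h
            · rcases Multiset.mem_add.mp h with h1 | h1
              · obtain ⟨p, _, rfl⟩ := Multiset.mem_map.mp h1
                exact hdd p
              · obtain ⟨j, _, rfl⟩ := Multiset.mem_map.mp h1
                exact hd1 j
            · rw [Multiset.eq_of_mem_replicate h]
              exact heabs
          show (1:ℝ) + |r| ≤ 1 + d
          linarith)
      rwa [hcard] at hstep2
    rw [hsum_eq]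
    exact le_trans hL1 hprodle
  -- final arithmetic
  rw [ge_iff_le, div_le_iff₀ (by positivity)]
  have hzeq := zeta_eq k
  have hA : (0:ℝ) < (Nat.factorial q : ℝ) := by positivity
  have hξ : paperXi k ≤ ((Nat.factorial q : ℝ) * (k:ℝ)^(k-q)) / 2^k := by
    have h1 := xi_le_fact k hk
    have h2 : (Nat.factorial k : ℝ) ≤ (Nat.factorial q : ℝ) * (k:ℝ)^(k-q) := by
      exact_mod_cast fact_le_fact_mul_pow (k-q) q k (by omega)
    rw [le_div_iff₀ (by positivity)]
    calc paperXi k * 2^k = 2^k * paperXi k := by ring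
    _ ≤ (Nat.factorial k : ℝ) := h1
    _ ≤ (Nat.factorial q : ℝ) * (k:ℝ)^(k-q) := h2
  have hid : ((Nat.factorial q : ℝ) * (dmin/2)^q) *
      (((Nat.factorial (k/2) * Nat.factorial (k - k/2) : ℕ) : ℝ) * dmin^k) *
      (((k:ℝ)*dmin/2)^(k-q))
      = ((Nat.factorial (k/2) * Nat.factorial (k - k/2) : ℕ) : ℝ) *
        (((Nat.factorial q : ℝ) * (k:ℝ)^(k-q)) / 2^k) * dmin^(2*k) := by
    have e_u : dmin^q * dmin^(k-q) = dmin^k := by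
      rw [← pow_add]
      congr 1
      omega
    have e_w : dmin^k * dmin^k = dmin^(2*k) := by
      rw [← pow_add]
      congr 1
      omega
    have e_s : (2:ℝ)^q * 2^(k-q) = 2^k := by
      rw [← pow_add]
      congr 1
      omega
    calc ((Nat.factorial q : ℝ) * (dmin/2)^q) *
        (((Nat.factorial (k/2) * Nat.factorial (k - k/2) : ℕ) : ℝ) * dmin^k) *
        (((k:ℝ)*dmin/2)^(k-q))
        = ((Nat.factorial (k/2) * Nat.factorial (k - k/2) : ℕ) : ℝ) *
          ((Nat.factorial q : ℝ) * (k:ℝ)^(k-q)) * ((dmin^q * dmin^(k-q)) * dmin^k) /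
          ((2:ℝ)^q * 2^(k-q)) := by
          rw [div_pow, div_pow, mul_pow]
          ring
      _ = ((Nat.factorial (k/2) * Nat.factorial (k - k/2) : ℕ) : ℝ) *
          ((Nat.factorial q : ℝ) * (k:ℝ)^(k-q)) * (dmin^k * dmin^k) / (2:ℝ)^k := by
          rw [e_u, e_s]
      _ = ((Nat.factorial (k/2) * Nat.factorial (k - k/2) : ℕ) : ℝ) *
          (((Nat.factorial q : ℝ) * (k:ℝ)^(k-q)) / 2^k) * dmin^(2*k) := by
          rw [e_w]
          ring
  calc paperZeta (k+1) * paperXi k * m * dmin^(2*k)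
      = ((Nat.factorial (k/2) * Nat.factorial (k - k/2) : ℕ) : ℝ) * paperXi k * m * dmin^(2*k) := by
        rw [hzeq]
    _ ≤ ((Nat.factorial (k/2) * Nat.factorial (k - k/2) : ℕ) : ℝ) *
          (((Nat.factorial q : ℝ) * (k:ℝ)^(k-q)) / 2^k) * m * dmin^(2*k) := by
        have hZ : (0:ℝ) ≤ ((Nat.factorial (k/2) * Nat.factorial (k - k/2) : ℕ) : ℝ) :=
          Nat.cast_nonneg _
        have hmul := mul_le_mul_of_nonneg_left hξ hZ
        have hmul2 := mul_le_mul_of_nonneg_right hmul hm.le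
        exact mul_le_mul_of_nonneg_right hmul2 (by positivity)
    _ = m * (((Nat.factorial q : ℝ) * (dmin/2)^q) *
          (((Nat.factorial (k/2) * Nat.factorial (k - k/2) : ℕ) : ℝ) * dmin^k) *
          (((k:ℝ)*dmin/2)^(k-q))) := by
        rw [hid]
        ring
    _ ≤ |∑ i : Fin (2*k+1), W.coeff (i:ℕ) * F i| := hSabs
    _ ≤ Sc * Real.sqrt (∑ i : Fin (2*k+1), F i ^ 2) := hCS
    _ ≤ (1+d)^(2*k) * Real.sqrt (∑ i : Fin (2*k+1), F i ^ 2) :=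
        mul_le_mul_of_nonneg_right hScle (Real.sqrt_nonneg _)
    _ = Real.sqrt (∑ i : Fin (2*k+1), F i ^ 2) * (1+d)^(2*k) := mul_comm _ _
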